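/- Let Ω be a symmetric positive definite 2n×2n matrix and e = [I; I] the 2n×n stacking of two identities. Then the fused covariance P = (eᵀ Ω^{-1} e)^{-1} satisfies P ≤ P1 and P ≤ P2 in the Loewner order, where P1 and P2 are the diagonal n×n blocks of Ω. -/

import Mathlib

open Matrix

private lemma conjT_eq_transpose {m k : Type*} (A : Matrix m k ℝ) : Aᴴ = Aᵀ := by
  ext i j; simp [conjTranspose_apply]

/-- The fused covariance `(eᵀ Ω⁻¹ e)⁻¹` is below both diagonal blocks of `Ω` in the
Loewner order. -/
theorem stmt_12 {n : ℕ} (Ω : Matrix (Fin n ⊕ Fin n) (Fin n ⊕ Fin n) ℝ)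
    (hΩ : Ω.PosDef) :
    let e : Matrix (Fin n ⊕ Fin n) (Fin n) ℝ := fromRows 1 1
    let P := (eᵀ * Ω⁻¹ * e)⁻¹
    (Ω.toBlocks₁₁ - P).PosSemidef ∧ (Ω.toBlocks₂₂ - P).PosSemidef := by
  intro e P
  have hdet : IsUnit Ω.det := isUnit_iff_ne_zero.mpr hΩ.det_pos.ne'
  have hinv : Ω⁻¹ * Ω = 1 := nonsing_inv_mul Ω hdet
  have hinv' : Ω * Ω⁻¹ = 1 := mul_nonsing_inv Ω hdet
  have hOi : (Ω⁻¹).PosDef := hΩ.inv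
  have hsym : Ωᵀ = Ω := by rw [← conjT_eq_transpose]; exact hΩ.1
  -- positive definiteness of A = eᵀ Ω⁻¹ e
  have hA : (eᵀ * Ω⁻¹ * e).PosDef := by
    rw [posDef_iff_dotProduct_mulVec]
    constructor
    · have := isHermitian_conjTranspose_mul_mul e hOi.1
      rwa [conjT_eq_transpose] at this
    · intro x hx
      have hmul : e *ᵥ x ≠ 0 := by
        show fromRows 1 1 *ᵥ x ≠ 0
        rw [fromRows_mulVec]
        intro h
        apply hx
        have := congrFun h
        ext i
        simpa using this (Sum.inl i)
      have := hOi.dotProduct_mulVec_pos hmul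
      simpa only [← conjT_eq_transpose, star_mulVec, dotProduct_mulVec,
        vecMul_vecMul] using this
  haveI : Invertible (eᵀ * Ω⁻¹ * e) :=
    invertibleOfIsUnitDet _ (isUnit_iff_ne_zero.mpr hA.det_pos.ne')
  -- key step via Schur complement
  have key : ∀ r : Matrix (Fin n ⊕ Fin n) (Fin n) ℝ,
      eᵀ * r = 1 → ((rᵀ * Ω * r) - P).PosSemidef := by
    intro r hr
    have hr' : rᵀ * e = 1 := by
      have := congrArg Matrix.transpose hr
      simpa [transpose_mul] using this
    set f : Matrix (Fin n ⊕ Fin n) (Fin n) ℝ := Ω * r with hf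
    have hbig : ((fromCols e f)ᴴ * Ω⁻¹ * fromCols e f).PosSemidef :=
      hOi.posSemidef.conjTranspose_mul_mul_same _
    have heq : (fromCols e f)ᴴ * Ω⁻¹ * fromCols e f =
        fromBlocks (eᵀ * Ω⁻¹ * e) 1 (1 : Matrix (Fin n) (Fin n) ℝ)ᴴ (rᵀ * Ω * r) := by
      have hB : eᵀ * Ω⁻¹ * f = 1 := by
        rw [hf, ← Matrix.mul_assoc, Matrix.mul_assoc (eᵀ) _ Ω, hinv, Matrix.mul_one, hr]
      have hC : fᵀ * Ω⁻¹ * e = (1 : Matrix (Fin n) (Fin n) ℝ)ᴴ := by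
        rw [hf, transpose_mul, hsym, Matrix.mul_assoc, Matrix.mul_assoc,
          ← Matrix.mul_assoc Ω, hinv', Matrix.one_mul, hr']
        simp
      have hD : fᵀ * Ω⁻¹ * f = rᵀ * Ω * r := by
        rw [hf, transpose_mul, hsym, Matrix.mul_assoc (rᵀ * Ω),
          ← Matrix.mul_assoc Ω⁻¹, hinv, Matrix.one_mul]
      rw [conjT_eq_transpose, transpose_fromCols, fromRows_mul, fromRows_mul_fromCols,
        hB, hC, hD]
    rw [heq] at hbig
    have := (PosDef.fromBlocks₁₁ (1 : Matrix (Fin n) (Fin n) ℝ) (rᵀ * Ω * r) hA).mp hbig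
    simpa [P] using this
  constructor
  · have h1 : eᵀ * fromRows (1 : Matrix (Fin n) (Fin n) ℝ) (0 : Matrix (Fin n) (Fin n) ℝ) = 1 := by
      show (fromRows (1 : Matrix (Fin n) (Fin n) ℝ) 1)ᵀ * fromRows (1 : Matrix (Fin n) (Fin n) ℝ) (0 : Matrix (Fin n) (Fin n) ℝ) = 1
      rw [transpose_fromRows, fromCols_mul_fromRows]
      simp
    have h2 : (fromRows (1 : Matrix (Fin n) (Fin n) ℝ) (0 : Matrix (Fin n) (Fin n) ℝ))ᵀ * Ω * fromRows (1 : Matrix (Fin n) (Fin n) ℝ) (0 : Matrix (Fin n) (Fin n) ℝ) =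
        Ω.toBlocks₁₁ := by
      conv_lhs => rw [← fromBlocks_toBlocks Ω]
      rw [transpose_fromRows, Matrix.mul_assoc, fromBlocks_mul_fromRows,
        fromCols_mul_fromRows]
      simp
    have := key (fromRows (1 : Matrix (Fin n) (Fin n) ℝ) (0 : Matrix (Fin n) (Fin n) ℝ)) h1
    rwa [h2] at this
  · have h1 : eᵀ * fromRows (0 : Matrix (Fin n) (Fin n) ℝ) (1 : Matrix (Fin n) (Fin n) ℝ) = 1 := by
      show (fromRows (1 : Matrix (Fin n) (Fin n) ℝ) 1)ᵀ * fromRows (0 : Matrix (Fin n) (Fin n) ℝ) (1 : Matrix (Fin n) (Fin n) ℝ) = 1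
      rw [transpose_fromRows, fromCols_mul_fromRows]
      simp
    have h2 : (fromRows (0 : Matrix (Fin n) (Fin n) ℝ) (1 : Matrix (Fin n) (Fin n) ℝ))ᵀ * Ω * fromRows (0 : Matrix (Fin n) (Fin n) ℝ) (1 : Matrix (Fin n) (Fin n) ℝ) =
        Ω.toBlocks₂₂ := by
      conv_lhs => rw [← fromBlocks_toBlocks Ω]
      rw [transpose_fromRows, Matrix.mul_assoc, fromBlocks_mul_fromRows,
        fromCols_mul_fromRows]
      simp
    have := key (fromRows (0 : Matrix (Fin n) (Fin n) ℝ) (1 : Matrix (Fin n) (Fin n) ℝ)) h1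
    rwa [h2] at this
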